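/- For all f, g, φ ∈ A = F[x,y,z], the Schouten bracket of any two multiples of the same exact bracket vanishes: [f·{·,·}_φ, g·{·,·}_φ]_S = 0 as a trilinear map A × A × A → A. -/

import Mathlib

open MvPolynomial

/-- The exact Poisson bracket `{P,Q}_ψ = det Jac(ψ,P,Q)` on `F[x,y,z]`. -/
noncomputable def pbr {F : Type*} [Field F] (ψ P Q : MvPolynomial (Fin 3) F) :
    MvPolynomial (Fin 3) F :=
  pderiv 0 ψ * (pderiv 1 P * pderiv 2 Q - pderiv 2 P * pderiv 1 Q)
  + pderiv 1 ψ * (pderiv 2 P * pderiv 0 Q - pderiv 0 P * pderiv 2 Q)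
  + pderiv 2 ψ * (pderiv 0 P * pderiv 1 Q - pderiv 1 P * pderiv 0 Q)


/-- The Schouten bracket of two (biderivation) brackets, as a trilinear map. -/
noncomputable def schouten {F : Type*} [Field F]
    (P Q : MvPolynomial (Fin 3) F → MvPolynomial (Fin 3) F → MvPolynomial (Fin 3) F)
    (a b c : MvPolynomial (Fin 3) F) : MvPolynomial (Fin 3) F :=
  P (Q a b) c - P (Q a c) b + P (Q b c) a + Q (P a b) c - Q (P a c) b + Q (P b c) a

lemma pderiv_comm' {R σ : Type*} [CommSemiring R] (i j : σ) (p : MvPolynomial σ R) :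
    pderiv i (pderiv j p) = pderiv j (pderiv i p) := by
  classical
  induction p using MvPolynomial.induction_on' with
  | monomial s a =>
    simp only [pderiv_monomial]
    rcases eq_or_ne i j with rfl | h
    · rfl
    · have h1 : (s - (Finsupp.single j 1 : _ →₀ ℕ)) i = s i := by
        simp [Finsupp.sub_apply, Finsupp.single_apply, h.symm]
      have h2 : (s - (Finsupp.single i 1 : _ →₀ ℕ)) j = s j := by
        simp [Finsupp.sub_apply, Finsupp.single_apply, h]
      rw [h1, h2]
      rw [show s - (Finsupp.single j 1 : _ →₀ ℕ) - (Finsupp.single i 1 : _ →₀ ℕ)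
            = s - (Finsupp.single i 1 : _ →₀ ℕ) - (Finsupp.single j 1 : _ →₀ ℕ) by
        ext k; simp [Finsupp.sub_apply]; omega]
      ring_nf
  | add p q hp hq => simp [hp, hq]

lemma dc10 {F : Type*} [Field F] (p : MvPolynomial (Fin 3) F) :
    pderiv 1 (pderiv 0 p) = pderiv 0 (pderiv 1 p) := pderiv_comm' 1 0 p
lemma dc20 {F : Type*} [Field F] (p : MvPolynomial (Fin 3) F) :
    pderiv 2 (pderiv 0 p) = pderiv 0 (pderiv 2 p) := pderiv_comm' 2 0 p
lemma dc21 {F : Type*} [Field F] (p : MvPolynomial (Fin 3) F) :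
    pderiv 2 (pderiv 1 p) = pderiv 1 (pderiv 2 p) := pderiv_comm' 2 1 p

/-- the Schouten bracket of any two multiples of the same exact bracket
vanishes. -/
theorem statement5 {F : Type*} [Field F] [CharZero F] (f g φ : MvPolynomial (Fin 3) F) :
    ∀ F₁ F₂ F₃ : MvPolynomial (Fin 3) F,
      schouten (fun P Q => f * pbr φ P Q) (fun P Q => g * pbr φ P Q) F₁ F₂ F₃ = 0 := by
  intro F₁ F₂ F₃
  simp only [schouten, pbr, pderiv_mul, map_add, map_sub, dc10, dc20, dc21]
  ring
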